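/- (Feldman–Moore for quotient spaces) Let F be a Borel enumerable equivalence relation on a quotient Borel space (X,E), i.e., F is the union of countably many graphs of Borel endomorphisms of (X,E). Then there is a countable group Γ acting by Borel automorphisms on (X,E) whose orbit equivalence relation is exactly F. -/

import Mathlib

open MeasureTheory Set

/-- A subset of the quotient is Borel iff its preimage under the projection is Borel. -/
def QBorelSet {X : Type} [MeasurableSpace X] (E : Setoid X) (A : Set (Quotient E)) : Prop :=
  MeasurableSet (Quotient.mk E ⁻¹' A)

/-- A relation between quotient Borel spaces is Borel iff its pullback to the
product of the standard Borel spaces is Borel. -/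
def QBorelRel {X Y : Type} [MeasurableSpace X] [MeasurableSpace Y]
    (E : Setoid X) (F : Setoid Y) (R : Set (Quotient E × Quotient F)) : Prop :=
  MeasurableSet {p : X × Y | (Quotient.mk E p.1, Quotient.mk F p.2) ∈ R}

/-- A function between quotient Borel spaces is Borel iff its graph is a Borel relation. -/
def QBorelFun {X Y : Type} [MeasurableSpace X] [MeasurableSpace Y]
    (E : Setoid X) (F : Setoid Y) (f : Quotient E → Quotient F) : Prop :=
  MeasurableSet {p : X × Y | f (Quotient.mk E p.1) = Quotient.mk F p.2}

/-- `E` is a countable Borel equivalence relation. -/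
def CBER {X : Type} [MeasurableSpace X] (E : Setoid X) : Prop :=
  MeasurableSet {p : X × X | E.r p.1 p.2} ∧ ∀ x : X, {y | E.r x y}.Countable

/-- `E` is smooth: Borel reducible to equality on some standard Borel space. -/
def SmoothRel {X : Type} [MeasurableSpace X] (E : Setoid X) : Prop :=
  ∃ (Y : Type) (_ : MeasurableSpace Y) (_ : StandardBorelSpace Y) (f : X → Y),
    Measurable f ∧ ∀ x y : X, E.r x y ↔ f x = f y

namespace Stmt16Comb
open scoped Classical

variable {Z : Type*}

/-- `x ∈ SA φ ψ` : `ψ` inverts `φ` at `x`. -/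
def SA (φ ψ : Z → Z) : Set Z := {x | ψ (φ x) = x}

/-- forward depth at least `k`. -/
def Fwd (φ ψ : Z → Z) (k : ℕ) : Set Z := {x | ∀ j, j < k → φ^[j] x ∈ SA φ ψ}

/-- the bi-infinite / cyclic part. -/
def LL (φ ψ : Z → Z) : Set Z := {x | ∀ k, x ∈ Fwd φ ψ k ∧ x ∈ Fwd ψ φ k}

/-- backward depth is exactly `k`. -/
def DB (φ ψ : Z → Z) (k : ℕ) : Set Z := {x | x ∈ Fwd ψ φ k ∧ x ∉ Fwd ψ φ (k + 1)}

/-- forward depth is exactly `k`. -/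
def DF (φ ψ : Z → Z) (k : ℕ) : Set Z := {x | x ∈ Fwd φ ψ k ∧ x ∉ Fwd φ ψ (k + 1)}

/-- backward-infinite part. -/
def BInf (φ ψ : Z → Z) : Set Z := {x | ∀ k, x ∈ Fwd ψ φ k}

/-- domain pieces of parity `i`. -/
def MM (φ ψ : Z → Z) (i : ℕ) : Set Z :=
  {x | x ∈ SA φ ψ ∧ x ∉ LL φ ψ ∧
    ((∃ j, x ∈ DB φ ψ (2 * j + i)) ∨ (x ∈ BInf φ ψ ∧ ∃ j, x ∈ DF φ ψ (2 * j + i)))}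

/-- image of `MM φ ψ i` under `φ`. -/
def NN (φ ψ : Z → Z) (i : ℕ) : Set Z := {x | x ∈ SA ψ φ ∧ ψ x ∈ MM φ ψ i}

/-- the parity involutions. -/
noncomputable def Tm (φ ψ : Z → Z) (i : ℕ) : Z → Z :=
  fun x => if x ∈ MM φ ψ i then φ x else if x ∈ NN φ ψ i then ψ x else x

/-- the cyclic-part map. -/
noncomputable def Tc (φ ψ : Z → Z) : Z → Z := fun x => if x ∈ LL φ ψ then φ x else x

variable {φ ψ : Z → Z} {x : Z} {k i : ℕ}

lemma sa_phi (hx : x ∈ SA φ ψ) : φ x ∈ SA ψ φ := by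
  show φ (ψ (φ x)) = φ x
  rw [hx]

lemma fwd_zero : x ∈ Fwd φ ψ 0 := fun j hj => absurd hj (Nat.not_lt_zero j)

lemma fwd_one : x ∈ Fwd φ ψ 1 ↔ x ∈ SA φ ψ := by
  constructor
  · intro h
    have := h 0 Nat.zero_lt_one
    simpa using this
  · intro h j hj
    interval_cases j
    simpa using h

lemma fwd_succ : x ∈ Fwd φ ψ (k + 1) ↔ x ∈ SA φ ψ ∧ φ x ∈ Fwd φ ψ k := by
  constructor
  · intro h
    refine ⟨by simpa using h 0 (Nat.succ_pos k), fun j hj => ?_⟩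
    have := h (j + 1) (Nat.succ_lt_succ hj)
    rwa [Function.iterate_succ_apply] at this
  · rintro ⟨h0, h1⟩ j hj
    cases j with
    | zero => simpa using h0
    | succ j' =>
      rw [Function.iterate_succ_apply]
      exact h1 j' (Nat.lt_of_succ_lt_succ hj)

lemma fwd_antitone (hkk : k ≤ i) : Fwd φ ψ i ⊆ Fwd φ ψ k :=
  fun _x hx j hj => hx j (lt_of_lt_of_le hj hkk)

lemma fwdb_succ (hx : x ∈ SA φ ψ) : φ x ∈ Fwd ψ φ (k + 1) ↔ x ∈ Fwd ψ φ k := by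
  rw [fwd_succ]
  constructor
  · rintro ⟨-, h⟩
    rwa [show ψ (φ x) = x from hx] at h
  · intro h
    exact ⟨sa_phi hx, by rwa [show ψ (φ x) = x from hx]⟩

lemma ll_sa (hx : x ∈ LL φ ψ) : x ∈ SA φ ψ := fwd_one.1 (hx 1).1

lemma ll_sb (hx : x ∈ LL φ ψ) : x ∈ SA ψ φ := fwd_one.1 (hx 1).2

lemma ll_swap : LL ψ φ = LL φ ψ := by
  ext x
  exact ⟨fun h k => (h k).symm, fun h k => (h k).symm⟩

lemma ll_phi (hx : x ∈ LL φ ψ) : φ x ∈ LL φ ψ := by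
  intro k
  constructor
  · exact (fwd_succ.1 (hx (k + 1)).1).2
  · cases k with
    | zero => exact fwd_zero
    | succ k' => exact (fwdb_succ (ll_sa hx)).2 (hx k').2

lemma ll_psi (hx : x ∈ LL φ ψ) : ψ x ∈ LL φ ψ := by
  rw [← ll_swap] at hx ⊢
  exact ll_phi hx

lemma tc_inv : ∀ x : Z, Tc ψ φ (Tc φ ψ x) = x := by
  intro x
  by_cases hx : x ∈ LL φ ψ
  · have h1 : φ x ∈ LL ψ φ := by rw [ll_swap]; exact ll_phi hx
    simp only [Tc, if_pos hx, if_pos h1]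
    exact ll_sa hx
  · have hx' : x ∉ LL ψ φ := by rwa [ll_swap]
    simp only [Tc, if_neg hx, if_neg hx']

lemma db_phi (hsa : x ∈ SA φ ψ) (hx : x ∈ DB φ ψ k) : φ x ∈ DB φ ψ (k + 1) := by
  refine ⟨(fwdb_succ hsa).2 hx.1, fun hc => hx.2 ?_⟩
  exact (fwdb_succ hsa).1 hc

lemma df_phi (hx : x ∈ DF φ ψ (k + 1)) : φ x ∈ DF φ ψ k := by
  obtain ⟨h1, h2⟩ := hx
  have hsa : x ∈ SA φ ψ := (fwd_succ.1 h1).1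
  refine ⟨(fwd_succ.1 h1).2, fun hc => h2 (fwd_succ.2 ⟨hsa, hc⟩)⟩

lemma binf_phi (hsa : x ∈ SA φ ψ) (hx : x ∈ BInf φ ψ) : φ x ∈ BInf φ ψ := by
  intro k
  cases k with
  | zero => exact fwd_zero
  | succ k' => exact (fwdb_succ hsa).2 (hx k')

lemma db_unique {k' : ℕ} (h : x ∈ DB φ ψ k) (h' : x ∈ DB φ ψ k') : k = k' := by
  rcases lt_trichotomy k k' with hlt | heq | hgt
  · exact absurd (fwd_antitone hlt h'.1) h.2
  · exact heq
  · exact absurd (fwd_antitone hgt h.1) h'.2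

lemma df_unique {k' : ℕ} (h : x ∈ DF φ ψ k) (h' : x ∈ DF φ ψ k') : k = k' := by
  rcases lt_trichotomy k k' with hlt | heq | hgt
  · exact absurd (fwd_antitone hlt h'.1) h.2
  · exact heq
  · exact absurd (fwd_antitone hgt h.1) h'.2

lemma db_not_binf (h : x ∈ DB φ ψ k) : x ∉ BInf φ ψ := fun hb => h.2 (hb (k + 1))

lemma sa_not_df0 (hsa : x ∈ SA φ ψ) : x ∉ DF φ ψ 0 := fun h => h.2 (fwd_one.2 hsa)

lemma exists_depth {S : ℕ → Set Z} (h0 : x ∈ S 0) (hnot : ¬ ∀ k, x ∈ S k) :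
    ∃ k, x ∈ S k ∧ x ∉ S (k + 1) := by
  by_contra hc
  push_neg at hc
  apply hnot
  intro k
  induction k with
  | zero => exact h0
  | succ k' ih => exact hc k' ih

lemma mm_cover (hsa : x ∈ SA φ ψ) (hll : x ∉ LL φ ψ) : ∃ i, i < 2 ∧ x ∈ MM φ ψ i := by
  by_cases hb : x ∈ BInf φ ψ
  · have hnot : ¬ ∀ k, x ∈ Fwd φ ψ k := fun hf => hll (fun k => ⟨hf k, hb k⟩)
    obtain ⟨k, hk1, hk2⟩ := exists_depth (S := Fwd φ ψ) fwd_zero hnot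
    refine ⟨k % 2, Nat.mod_lt k two_pos, hsa, hll, Or.inr ⟨hb, k / 2, ?_⟩⟩
    rw [show 2 * (k / 2) + k % 2 = k from Nat.div_add_mod k 2]
    exact ⟨hk1, hk2⟩
  · have hnot : ¬ ∀ k, x ∈ Fwd ψ φ k := hb
    obtain ⟨k, hk1, hk2⟩ := exists_depth (S := Fwd ψ φ) fwd_zero hnot
    refine ⟨k % 2, Nat.mod_lt k two_pos, hsa, hll, Or.inl ⟨k / 2, ?_⟩⟩
    rw [show 2 * (k / 2) + k % 2 = k from Nat.div_add_mod k 2]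
    exact ⟨hk1, hk2⟩

lemma mm_sa (h : x ∈ MM φ ψ i) : x ∈ SA φ ψ := h.1

lemma mm_not_ll (h : x ∈ MM φ ψ i) : x ∉ LL φ ψ := h.2.1

lemma phi_not_ll (hsa : x ∈ SA φ ψ) (hll : x ∉ LL φ ψ) : φ x ∉ LL φ ψ := by
  intro hc
  apply hll
  have := ll_psi hc
  rwa [show ψ (φ x) = x from hsa] at this

lemma mm_phi_nn (h : x ∈ MM φ ψ i) : φ x ∈ NN φ ψ i := by
  refine ⟨sa_phi h.1, ?_⟩
  rwa [show ψ (φ x) = x from h.1]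

lemma nn_sb (h : x ∈ NN φ ψ i) : x ∈ SA ψ φ := h.1

lemma mm_nn_disj (h : x ∈ MM φ ψ i) : x ∉ NN φ ψ i := by
  rintro ⟨hsb, hz⟩
  -- z := ψ x ∈ MM i and φ z = x
  set z := ψ x with hzdef
  have hphz : φ z = x := hsb
  have hzsa : z ∈ SA φ ψ := hz.1
  rcases hz.2.2 with ⟨j, hdb⟩ | ⟨hbinf, j, hdf⟩
  · -- z ∈ DB (2j+i) so x = φ z ∈ DB (2j+i+1)
    have hx' : x ∈ DB φ ψ (2 * j + i + 1) := by
      have := db_phi hzsa hdb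
      rwa [hphz] at this
    rcases h.2.2 with ⟨j', hdb'⟩ | ⟨hbinf', _⟩
    · have := db_unique hdb' hx'
      omega
    · exact db_not_binf hx' hbinf'
  · -- z backward infinite, z ∈ DF (2j+i)
    have hxbinf : x ∈ BInf φ ψ := by
      have := binf_phi hzsa hbinf
      rwa [hphz] at this
    rcases h.2.2 with ⟨j', hdb'⟩ | ⟨-, j', hdf'⟩
    · exact db_not_binf hdb' hxbinf
    · -- z ∈ DF (2j+i), 2j+i ≥ 1 since z ∈ SA; x = φ z ∈ DF (2j+i-1)
      have hpos : 2 * j + i ≠ 0 := by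
        intro h0
        rw [h0] at hdf
        exact sa_not_df0 hzsa hdf
      obtain ⟨r, hr⟩ := Nat.exists_eq_succ_of_ne_zero hpos
      rw [hr] at hdf
      have hx' : x ∈ DF φ ψ r := by
        have := df_phi hdf
        rwa [hphz] at this
      have := df_unique hdf' hx'
      omega

lemma mm_tm (h : x ∈ MM φ ψ i) : Tm φ ψ i x = φ x := if_pos h

lemma tm_invol : ∀ x : Z, Tm φ ψ i (Tm φ ψ i x) = x := by
  intro x
  by_cases h1 : x ∈ MM φ ψ i
  · rw [mm_tm h1]
    have hn : φ x ∈ NN φ ψ i := mm_phi_nn h1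
    have hm : φ x ∉ MM φ ψ i := fun hc => mm_nn_disj hc hn
    simp only [Tm, if_neg hm, if_pos hn]
    exact h1.1
  · by_cases h2 : x ∈ NN φ ψ i
    · have hm : ψ x ∈ MM φ ψ i := h2.2
      simp only [Tm, if_neg h1, if_pos h2, if_pos hm]
      exact h2.1
    · simp only [Tm, if_neg h1, if_neg h2]

lemma ll_tc (h : x ∈ LL φ ψ) : Tc φ ψ x = φ x := if_pos h

lemma tm_cases : Tm φ ψ i x = φ x ∨ Tm φ ψ i x = ψ x ∨ Tm φ ψ i x = x := by
  unfold Tm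
  split
  · exact Or.inl rfl
  split
  · exact Or.inr (Or.inl rfl)
  · exact Or.inr (Or.inr rfl)

lemma tc_cases : Tc φ ψ x = φ x ∨ Tc φ ψ x = x := by
  unfold Tc
  split
  · exact Or.inl rfl
  · exact Or.inr rfl

end Stmt16Comb



set_option linter.unusedSectionVars false
namespace Stmt16Aux
open scoped Classical

lemma meas_of_two_proj {α β : Type} [MeasurableSpace α] [StandardBorelSpace α]
    [MeasurableSpace β] [StandardBorelSpace β] {T T' : Set (α × β)}
    (hT : MeasurableSet T) (hT' : MeasurableSet T')
    (h : ∀ a, (∃ b, (a, b) ∈ T) ↔ ¬ ∃ b, (a, b) ∈ T') :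
    MeasurableSet {a | ∃ b, (a, b) ∈ T} := by
  letI := upgradeStandardBorel α
  have himg : ∀ S : Set (α × β), MeasurableSet S → AnalyticSet {a | ∃ b, (a, b) ∈ S} := by
    intro S hS
    have hi : {a | ∃ b, (a, b) ∈ S} = Prod.fst '' S := by
      ext a
      constructor
      · rintro ⟨b, hb⟩; exact ⟨(a, b), hb, rfl⟩
      · rintro ⟨⟨a', b⟩, hb, rfl⟩; exact ⟨b, hb⟩
    rw [hi]
    exact hS.analyticSet_image measurable_fst
  have hcompl : {a | ∃ b, (a, b) ∈ T}ᶜ = {a | ∃ b, (a, b) ∈ T'} := by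
    ext a
    simp only [mem_compl_iff, mem_setOf_eq, h a, not_not]
  exact (himg T hT).measurableSet_of_compl (by rw [hcompl]; exact himg T' hT')

variable {X : Type} [MeasurableSpace X] [StandardBorelSpace X] {E : Setoid X}

lemma qfun_id (hE : CBER E) : QBorelFun E E (fun x => x) := by
  have h : {p : X × X | (fun (x : Quotient E) => x) (Quotient.mk E p.1) = Quotient.mk E p.2}
      = {p : X × X | E.r p.1 p.2} := by
    ext p
    simp only [mem_setOf_eq]
    exact ⟨fun h => Quotient.exact h, fun h => Quotient.sound h⟩
  unfold QBorelFun
  rw [h]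
  exact hE.1

lemma qfun_comp {g h : Quotient E → Quotient E} (hg : QBorelFun E E g) (hh : QBorelFun E E h) :
    QBorelFun E E (fun x => g (h x)) := by
  unfold QBorelFun at *
  have key := meas_of_two_proj (α := X × X) (β := X)
    (T := {p : (X × X) × X | h (Quotient.mk E p.1.1) = Quotient.mk E p.2 ∧
           g (Quotient.mk E p.2) = Quotient.mk E p.1.2})
    (T' := {p : (X × X) × X | h (Quotient.mk E p.1.1) = Quotient.mk E p.2 ∧
           ¬ g (Quotient.mk E p.2) = Quotient.mk E p.1.2})
    (by
      refine MeasurableSet.inter ?_ ?_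
      · exact hh.preimage ((measurable_fst.comp measurable_fst).prodMk measurable_snd)
      · exact hg.preimage (measurable_snd.prodMk (measurable_snd.comp measurable_fst)))
    (by
      refine MeasurableSet.inter ?_ ?_
      · exact hh.preimage ((measurable_fst.comp measurable_fst).prodMk measurable_snd)
      · exact (hg.preimage (measurable_snd.prodMk (measurable_snd.comp measurable_fst))).compl)
    (by
      rintro ⟨x, z⟩
      constructor
      · rintro ⟨y, hy1, hy2⟩ ⟨y', hy'1, hy'2⟩
        exact hy'2 (by rw [← hy'1, hy1, hy2])
      · intro hne
        obtain ⟨y₀, hy₀⟩ := Quotient.exists_rep (h (Quotient.mk E x))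
        by_cases hc : g (Quotient.mk E y₀) = Quotient.mk E z
        · exact ⟨y₀, hy₀.symm, hc⟩
        · exact absurd ⟨y₀, hy₀.symm, hc⟩ hne)
  have hs : {p : X × X | g (h (Quotient.mk E p.1)) = Quotient.mk E p.2}
      = {a : X × X | ∃ b, (a, b) ∈ {p : (X × X) × X | h (Quotient.mk E p.1.1) = Quotient.mk E p.2 ∧
           g (Quotient.mk E p.2) = Quotient.mk E p.1.2}} := by
    ext ⟨x, z⟩
    simp only [mem_setOf_eq]
    constructor
    · intro hxz
      obtain ⟨y₀, hy₀⟩ := Quotient.exists_rep (h (Quotient.mk E x))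
      exact ⟨y₀, hy₀.symm, by rw [hy₀, hxz]⟩
    · rintro ⟨y, hy1, hy2⟩
      rw [hy1, hy2]
  rw [hs]
  exact key

lemma qset_eqz {g h : Quotient E → Quotient E} (hg : QBorelFun E E g) (hh : QBorelFun E E h) :
    MeasurableSet {x : X | g (Quotient.mk E x) = h (Quotient.mk E x)} := by
  unfold QBorelFun at *
  have key := meas_of_two_proj (α := X) (β := X)
    (T := {p : X × X | g (Quotient.mk E p.1) = Quotient.mk E p.2 ∧
           h (Quotient.mk E p.1) = Quotient.mk E p.2})
    (T' := {p : X × X | g (Quotient.mk E p.1) = Quotient.mk E p.2 ∧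
           ¬ h (Quotient.mk E p.1) = Quotient.mk E p.2})
    (hg.inter hh)
    (hg.inter hh.compl)
    (by
      intro x
      constructor
      · rintro ⟨y, hy1, hy2⟩ ⟨y', hy'1, hy'2⟩
        exact hy'2 (by rw [← hy'1, hy1, ← hy2])
      · intro hne
        obtain ⟨y₀, hy₀⟩ := Quotient.exists_rep (g (Quotient.mk E x))
        by_cases hc : h (Quotient.mk E x) = Quotient.mk E y₀
        · exact ⟨y₀, hy₀.symm, hc⟩
        · exact absurd ⟨y₀, hy₀.symm, hc⟩ hne)
  have hs : {x : X | g (Quotient.mk E x) = h (Quotient.mk E x)}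
      = {a : X | ∃ b, (a, b) ∈ {p : X × X | g (Quotient.mk E p.1) = Quotient.mk E p.2 ∧
           h (Quotient.mk E p.1) = Quotient.mk E p.2}} := by
    ext x
    simp only [mem_setOf_eq]
    constructor
    · intro hx
      obtain ⟨y₀, hy₀⟩ := Quotient.exists_rep (g (Quotient.mk E x))
      exact ⟨y₀, hy₀.symm, by rw [← hx, hy₀]⟩
    · rintro ⟨y, hy1, hy2⟩
      rw [hy1, hy2]
  rw [hs]
  exact key

lemma qset_mem {g : Quotient E → Quotient E} (hg : QBorelFun E E g) {A : Set (Quotient E)}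
    (hA : MeasurableSet (Quotient.mk E ⁻¹' A)) :
    MeasurableSet {x : X | g (Quotient.mk E x) ∈ A} := by
  unfold QBorelFun at hg
  have key := meas_of_two_proj (α := X) (β := X)
    (T := {p : X × X | g (Quotient.mk E p.1) = Quotient.mk E p.2 ∧ Quotient.mk E p.2 ∈ A})
    (T' := {p : X × X | g (Quotient.mk E p.1) = Quotient.mk E p.2 ∧ Quotient.mk E p.2 ∉ A})
    (hg.inter (hA.preimage measurable_snd))
    (hg.inter (hA.preimage measurable_snd).compl)
    (by
      intro x
      constructor
      · rintro ⟨y, hy1, hy2⟩ ⟨y', hy'1, hy'2⟩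
        refine hy'2 ?_
        rw [← hy'1]
        rw [← hy1] at hy2
        exact hy2
      · intro hne
        obtain ⟨y₀, hy₀⟩ := Quotient.exists_rep (g (Quotient.mk E x))
        by_cases hc : Quotient.mk E y₀ ∈ A
        · exact ⟨y₀, hy₀.symm, hc⟩
        · exact absurd ⟨y₀, hy₀.symm, hc⟩ hne)
  have hs : {x : X | g (Quotient.mk E x) ∈ A}
      = {a : X | ∃ b, (a, b) ∈ {p : X × X | g (Quotient.mk E p.1) = Quotient.mk E p.2 ∧
          Quotient.mk E p.2 ∈ A}} := by
    ext x
    simp only [mem_setOf_eq]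
    constructor
    · intro hx
      obtain ⟨y₀, hy₀⟩ := Quotient.exists_rep (g (Quotient.mk E x))
      exact ⟨y₀, hy₀.symm, by rwa [hy₀]⟩
    · rintro ⟨y, hy1, hy2⟩
      rwa [hy1]
  rw [hs]
  exact key

lemma qfun_ite {g h : Quotient E → Quotient E} {A : Set (Quotient E)}
    (hA : MeasurableSet (Quotient.mk E ⁻¹' A))
    (hg : QBorelFun E E g) (hh : QBorelFun E E h) :
    QBorelFun E E (fun x => if x ∈ A then g x else h x) := by
  unfold QBorelFun at *
  have hs : {p : X × X | (if Quotient.mk E p.1 ∈ A then g (Quotient.mk E p.1)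
        else h (Quotient.mk E p.1)) = Quotient.mk E p.2}
      = (({p : X × X | Quotient.mk E p.1 ∈ A} ∩
          {p : X × X | g (Quotient.mk E p.1) = Quotient.mk E p.2}) ∪
         ({p : X × X | Quotient.mk E p.1 ∈ A}ᶜ ∩
          {p : X × X | h (Quotient.mk E p.1) = Quotient.mk E p.2})) := by
    ext p
    by_cases hp : Quotient.mk E p.1 ∈ A <;>
      simp [hp]
  show MeasurableSet {p : X × X | (if Quotient.mk E p.1 ∈ A then g (Quotient.mk E p.1)
        else h (Quotient.mk E p.1)) = Quotient.mk E p.2}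
  rw [hs]
  exact ((hA.preimage measurable_fst).inter hg).union
    (((hA.preimage measurable_fst).compl).inter hh)


end Stmt16Aux

namespace Stmt16Aux
open Stmt16Comb
open scoped Classical

variable {X : Type} [MeasurableSpace X] [StandardBorelSpace X] {E : Setoid X}
variable {φ ψ : Quotient E → Quotient E}

lemma qfun_iterate (hE : CBER E) (hφ : QBorelFun E E φ) : ∀ j, QBorelFun E E (φ^[j]) := by
  intro j
  induction j with
  | zero =>
    have h : (φ^[0] : Quotient E → Quotient E) = fun x => x := rfl
    rw [h]
    exact qfun_id hE
  | succ j' ih =>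
    have h : (φ^[j'+1] : Quotient E → Quotient E) = fun x => φ (φ^[j'] x) := by
      funext x
      exact Function.iterate_succ_apply' φ j' x
    rw [h]
    exact qfun_comp hφ ih

lemma qset_SA (hE : CBER E) (hφ : QBorelFun E E φ) (hψ : QBorelFun E E ψ) :
    MeasurableSet (Quotient.mk E ⁻¹' SA φ ψ) := by
  have := qset_eqz (g := fun q => ψ (φ q)) (h := fun q => q) (qfun_comp hψ hφ) (qfun_id hE)
  exact this

lemma qset_Fwd (hE : CBER E) (hφ : QBorelFun E E φ) (hψ : QBorelFun E E ψ) (k : ℕ) :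
    MeasurableSet (Quotient.mk E ⁻¹' Fwd φ ψ k) := by
  have h : Quotient.mk E ⁻¹' Fwd φ ψ k =
      ⋂ j, ⋂ (_ : j < k), {x : X | φ^[j] (Quotient.mk E x) ∈ SA φ ψ} := by
    ext x
    simp only [Set.mem_preimage, Set.mem_iInter, Set.mem_setOf_eq]
    exact Iff.rfl
  rw [h]
  exact MeasurableSet.iInter fun j => MeasurableSet.iInter fun _ =>
    qset_mem (qfun_iterate hE hφ j) (qset_SA hE hφ hψ)

lemma qset_LL (hE : CBER E) (hφ : QBorelFun E E φ) (hψ : QBorelFun E E ψ) :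
    MeasurableSet (Quotient.mk E ⁻¹' LL φ ψ) := by
  have h : Quotient.mk E ⁻¹' LL φ ψ =
      ⋂ k, (Quotient.mk E ⁻¹' Fwd φ ψ k ∩ Quotient.mk E ⁻¹' Fwd ψ φ k) := by
    ext x
    simp only [Set.mem_preimage, Set.mem_iInter, Set.mem_inter_iff]
    exact Iff.rfl
  rw [h]
  exact MeasurableSet.iInter fun k =>
    (qset_Fwd hE hφ hψ k).inter (qset_Fwd hE hψ hφ k)

lemma qset_DB (hE : CBER E) (hφ : QBorelFun E E φ) (hψ : QBorelFun E E ψ) (k : ℕ) :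
    MeasurableSet (Quotient.mk E ⁻¹' DB φ ψ k) := by
  have h : Quotient.mk E ⁻¹' DB φ ψ k =
      Quotient.mk E ⁻¹' Fwd ψ φ k ∩ (Quotient.mk E ⁻¹' Fwd ψ φ (k+1))ᶜ := rfl
  rw [h]
  exact (qset_Fwd hE hψ hφ k).inter (qset_Fwd hE hψ hφ (k+1)).compl

lemma qset_DF (hE : CBER E) (hφ : QBorelFun E E φ) (hψ : QBorelFun E E ψ) (k : ℕ) :
    MeasurableSet (Quotient.mk E ⁻¹' DF φ ψ k) := by
  have h : Quotient.mk E ⁻¹' DF φ ψ k =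
      Quotient.mk E ⁻¹' Fwd φ ψ k ∩ (Quotient.mk E ⁻¹' Fwd φ ψ (k+1))ᶜ := rfl
  rw [h]
  exact (qset_Fwd hE hφ hψ k).inter (qset_Fwd hE hφ hψ (k+1)).compl

lemma qset_BInf (hE : CBER E) (hφ : QBorelFun E E φ) (hψ : QBorelFun E E ψ) :
    MeasurableSet (Quotient.mk E ⁻¹' BInf φ ψ) := by
  have h : Quotient.mk E ⁻¹' BInf φ ψ = ⋂ k, Quotient.mk E ⁻¹' Fwd ψ φ k := by
    ext x
    simp only [Set.mem_preimage, Set.mem_iInter]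
    exact Iff.rfl
  rw [h]
  exact MeasurableSet.iInter fun k => qset_Fwd hE hψ hφ k

lemma qset_MM (hE : CBER E) (hφ : QBorelFun E E φ) (hψ : QBorelFun E E ψ) (i : ℕ) :
    MeasurableSet (Quotient.mk E ⁻¹' MM φ ψ i) := by
  have h : Quotient.mk E ⁻¹' MM φ ψ i =
      Quotient.mk E ⁻¹' SA φ ψ ∩ ((Quotient.mk E ⁻¹' LL φ ψ)ᶜ ∩
        ((⋃ j, Quotient.mk E ⁻¹' DB φ ψ (2*j+i)) ∪
         (Quotient.mk E ⁻¹' BInf φ ψ ∩ ⋃ j, Quotient.mk E ⁻¹' DF φ ψ (2*j+i)))) := by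
    ext x
    simp only [Set.mem_preimage, Set.mem_inter_iff, Set.mem_compl_iff, Set.mem_union,
      Set.mem_iUnion]
    exact ⟨fun ⟨a, b, c⟩ => ⟨a, b, c⟩, fun ⟨a, b, c⟩ => ⟨a, b, c⟩⟩
  rw [h]
  exact (qset_SA hE hφ hψ).inter ((qset_LL hE hφ hψ).compl.inter
    ((MeasurableSet.iUnion fun j => qset_DB hE hφ hψ (2*j+i)).union
     ((qset_BInf hE hφ hψ).inter (MeasurableSet.iUnion fun j => qset_DF hE hφ hψ (2*j+i)))))

lemma qset_NN (hE : CBER E) (hφ : QBorelFun E E φ) (hψ : QBorelFun E E ψ) (i : ℕ) :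
    MeasurableSet (Quotient.mk E ⁻¹' NN φ ψ i) := by
  have h : Quotient.mk E ⁻¹' NN φ ψ i =
      Quotient.mk E ⁻¹' SA ψ φ ∩ {x : X | ψ (Quotient.mk E x) ∈ MM φ ψ i} := rfl
  rw [h]
  exact (qset_SA hE hψ hφ).inter (qset_mem hψ (qset_MM hE hφ hψ i))

lemma qfun_Tm (hE : CBER E) (hφ : QBorelFun E E φ) (hψ : QBorelFun E E ψ) (i : ℕ) :
    QBorelFun E E (Tm φ ψ i) :=
  qfun_ite (qset_MM hE hφ hψ i) hφ (qfun_ite (qset_NN hE hφ hψ i) hψ (qfun_id hE))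

lemma qfun_Tc (hE : CBER E) (hφ : QBorelFun E E φ) (hψ : QBorelFun E E ψ) :
    QBorelFun E E (Tc φ ψ) :=
  qfun_ite (qset_LL hE hφ hψ) hφ (qfun_id hE)

end Stmt16Aux

/-- Feldman–Moore for quotient spaces: a Borel enumerable equivalence relation
on a quotient Borel space is the orbit equivalence relation of a Borel action of a countable
group. -/
theorem stmt_16 {X : Type} [MeasurableSpace X] [StandardBorelSpace X]
    (E : Setoid X) (hE : CBER E)
    (F : Quotient E → Quotient E → Prop) (hFeq : Equivalence F)
    (f : ℕ → Quotient E → Quotient E) (hfB : ∀ n, QBorelFun E E (f n))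
    (henum : ∀ x y : Quotient E, F x y ↔ ∃ n, f n x = y) :
    ∃ (Γ : Type) (_ : Group Γ) (_ : Countable Γ)
      (a : Γ → Quotient E → Quotient E),
      (∀ x, a 1 x = x) ∧ (∀ γ δ x, a (γ * δ) x = a γ (a δ x)) ∧
      (∀ γ, QBorelFun E E (a γ)) ∧
      ∀ x y : Quotient E, F x y ↔ ∃ γ, a γ x = y := by

  classical
  have hFf : ∀ k x, F x (f k x) := fun k x => (henum x (f k x)).2 ⟨k, rfl⟩
  -- the generators
  let gen : ℕ × ℕ × ℕ → Equiv.Perm (Quotient E) := fun t =>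
    if t.2.2 = 0 then
      ⟨Stmt16Comb.Tc (f t.1) (f t.2.1), Stmt16Comb.Tc (f t.2.1) (f t.1),
        Stmt16Comb.tc_inv, Stmt16Comb.tc_inv⟩
    else
      ⟨Stmt16Comb.Tm (f t.1) (f t.2.1) (t.2.2 - 1), Stmt16Comb.Tm (f t.1) (f t.2.1) (t.2.2 - 1),
        Stmt16Comb.tm_invol, Stmt16Comb.tm_invol⟩
  let Φ : FreeGroup (ℕ × ℕ × ℕ) →* Equiv.Perm (Quotient E) := FreeGroup.lift gen
  have hgen : ∀ t, QBorelFun E E (gen t) ∧ QBorelFun E E ⇑(gen t)⁻¹ ∧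
      (∀ x, F x (gen t x)) ∧ (∀ x, F x ((gen t)⁻¹ x)) := by
    intro t
    obtain ⟨n, m, j⟩ := t
    by_cases hj : j = 0
    · have hg : gen (n, m, j) =
          ⟨Stmt16Comb.Tc (f n) (f m), Stmt16Comb.Tc (f m) (f n),
            Stmt16Comb.tc_inv, Stmt16Comb.tc_inv⟩ := by
        simp only [gen, hj, if_pos rfl]
      rw [hg]
      refine ⟨Stmt16Aux.qfun_Tc hE (hfB n) (hfB m), ?_, ?_, ?_⟩
      · rw [Equiv.Perm.inv_def]
        exact Stmt16Aux.qfun_Tc hE (hfB m) (hfB n)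
      · intro x
        rcases Stmt16Comb.tc_cases (φ := f n) (ψ := f m) (x := x) with h | h
        · show F x (Stmt16Comb.Tc (f n) (f m) x)
          rw [h]; exact hFf n x
        · show F x (Stmt16Comb.Tc (f n) (f m) x)
          rw [h]; exact hFeq.refl x
      · intro x
        rw [Equiv.Perm.inv_def]
        rcases Stmt16Comb.tc_cases (φ := f m) (ψ := f n) (x := x) with h | h
        · show F x (Stmt16Comb.Tc (f m) (f n) x)
          rw [h]; exact hFf m x
        · show F x (Stmt16Comb.Tc (f m) (f n) x)
          rw [h]; exact hFeq.refl x
    · have hg : gen (n, m, j) =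
          ⟨Stmt16Comb.Tm (f n) (f m) (j - 1), Stmt16Comb.Tm (f n) (f m) (j - 1),
            Stmt16Comb.tm_invol, Stmt16Comb.tm_invol⟩ := by
        simp only [gen, if_neg hj]
      rw [hg]
      have hFT : ∀ x, F x (Stmt16Comb.Tm (f n) (f m) (j - 1) x) := by
        intro x
        rcases Stmt16Comb.tm_cases (φ := f n) (ψ := f m) (i := j - 1) (x := x) with h | h | h
        · rw [h]; exact hFf n x
        · rw [h]; exact hFf m x
        · rw [h]; exact hFeq.refl x
      refine ⟨Stmt16Aux.qfun_Tm hE (hfB n) (hfB m) (j - 1), ?_, hFT, ?_⟩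
      · rw [Equiv.Perm.inv_def]
        exact Stmt16Aux.qfun_Tm hE (hfB n) (hfB m) (j - 1)
      · intro x
        rw [Equiv.Perm.inv_def]
        exact hFT x
  have main : ∀ γ, QBorelFun E E (fun x => Φ γ x) ∧ ∀ x, F x (Φ γ x) := by
    intro γ
    refine FreeGroup.induction_on γ ?_ ?_ ?_ ?_
    · constructor
      · have h1 : (fun x => Φ 1 x) = fun x : Quotient E => x := by
          funext x
          rw [map_one]
          rfl
        rw [h1]
        exact Stmt16Aux.qfun_id hE
      · intro x
        have h2 : Φ 1 x = x := by rw [map_one]; rfl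
        rw [h2]
        exact hFeq.refl x
    · intro t
      have h1 : Φ (FreeGroup.of t) = gen t := FreeGroup.lift_apply_of
      rw [h1]
      exact ⟨(hgen t).1, (hgen t).2.2.1⟩
    · intro t _
      have h1 : Φ (FreeGroup.of t)⁻¹ = (gen t)⁻¹ := by
        rw [map_inv]
        first
        | rfl
        | (congr 1; exact FreeGroup.lift_apply_of)
      rw [h1]
      exact ⟨(hgen t).2.1, (hgen t).2.2.2⟩
    · intro γ δ ihγ ihδ
      have h1 : (fun x => Φ (γ * δ) x) = fun x => Φ γ (Φ δ x) := by
        funext x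
        rw [map_mul]
        first
        | exact Equiv.Perm.mul_apply _ _ _
        | skip
      constructor
      · rw [show QBorelFun E E (fun x => Φ (γ * δ) x) =
            QBorelFun E E (fun x => Φ γ (Φ δ x)) from by rw [h1]]
        exact Stmt16Aux.qfun_comp ihγ.1 ihδ.1
      · intro x
        have h2 : Φ (γ * δ) x = Φ γ (Φ δ x) := by
          rw [map_mul]
          first
          | exact Equiv.Perm.mul_apply _ _ _
          | skip
        rw [h2]
        exact hFeq.trans (ihδ.2 x) (ihγ.2 (Φ δ x))
  have hcnt : Countable (FreeGroup (ℕ × ℕ × ℕ)) :=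
    (Quot.mk_surjective (r := @FreeGroup.Red.Step (ℕ×ℕ×ℕ))).countable
  refine ⟨FreeGroup (ℕ × ℕ × ℕ), inferInstance, hcnt, fun γ x => Φ γ x, ?_, ?_, ?_, ?_⟩
  · intro x
    show Φ 1 x = x
    rw [map_one]
    rfl
  · intro γ δ x
    show Φ (γ * δ) x = Φ γ (Φ δ x)
    rw [map_mul]
    first
    | exact Equiv.Perm.mul_apply _ _ _
    | skip
  · intro γ
    exact (main γ).1
  · intro x y
    constructor
    · intro hF
      obtain ⟨n, hn⟩ := (henum x y).1 hF
      obtain ⟨m, hm⟩ := (henum y x).1 (hFeq.symm hF)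
      have hsa : x ∈ Stmt16Comb.SA (f n) (f m) := by
        show f m (f n x) = x
        rw [hn, hm]
      by_cases hll : x ∈ Stmt16Comb.LL (f n) (f m)
      · refine ⟨FreeGroup.of (n, m, 0), ?_⟩
        have h1 : Φ (FreeGroup.of (n, m, 0)) = gen (n, m, 0) := FreeGroup.lift_apply_of
        show Φ (FreeGroup.of (n, m, 0)) x = y
        rw [h1]
        have hg : gen (n, m, 0) =
            ⟨Stmt16Comb.Tc (f n) (f m), Stmt16Comb.Tc (f m) (f n),
              Stmt16Comb.tc_inv, Stmt16Comb.tc_inv⟩ := by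
          simp only [gen, if_pos rfl]
        rw [hg]
        show Stmt16Comb.Tc (f n) (f m) x = y
        rw [Stmt16Comb.ll_tc hll, hn]
      · obtain ⟨i, _, hmm⟩ := Stmt16Comb.mm_cover hsa hll
        refine ⟨FreeGroup.of (n, m, i + 1), ?_⟩
        have h1 : Φ (FreeGroup.of (n, m, i + 1)) = gen (n, m, i + 1) := FreeGroup.lift_apply_of
        show Φ (FreeGroup.of (n, m, i + 1)) x = y
        rw [h1]
        have hg : gen (n, m, i + 1) =
            ⟨Stmt16Comb.Tm (f n) (f m) i, Stmt16Comb.Tm (f n) (f m) i,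
              Stmt16Comb.tm_invol, Stmt16Comb.tm_invol⟩ := by
          simp only [gen, if_neg (Nat.succ_ne_zero i), Nat.succ_sub_one]
        rw [hg]
        show Stmt16Comb.Tm (f n) (f m) i x = y
        rw [Stmt16Comb.mm_tm hmm, hn]
    · rintro ⟨γ, rfl⟩
      exact (main γ).2 x
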